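/- The set S_{(s,0)} = { Σ_{k=1}^∞ c_k / s^{c_1+⋯+c_k} : (c_k) ∈ {1,...,s-1}^ℕ } is uncountable; indeed the map sending a sequence (c_k) ∈ {1,...,s-1}^ℕ to Σ_{k=1}^∞ c_k / s^{c_1+⋯+c_k} is injective. -/

import Mathlib

open Finset

/-- The term of the series: `c n / s ^ (c 1 + ... + c (n+1))` (0-indexed). -/
noncomputable def sTerm (s : ℕ) (c : ℕ → ℕ) (n : ℕ) : ℝ :=
  (c n : ℝ) / (s : ℝ) ^ (∑ k ∈ Finset.range (n + 1), c k)

/-- `x = Σ_{k=1}^∞ c_k / s^{c_1+⋯+c_k}`. -/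
noncomputable def sVal (s : ℕ) (c : ℕ → ℕ) : ℝ := ∑' n : ℕ, sTerm s c n

/-- The sequence `(c_k)` has all terms in `{1, ..., s-1}`. -/
def sValid (s : ℕ) (c : ℕ → ℕ) : Prop := ∀ k, 1 ≤ c k ∧ c k ≤ s - 1

/-- The set `S_{(s,0)}`. -/
def Sset (s : ℕ) : Set ℝ := { x | ∃ c : ℕ → ℕ, sValid s c ∧ x = sVal s c }

/-- The cylinder `Δ'_{c_1 ... c_n}` of rank `n` with base the first `n` terms of `c`. -/
def cyl (s n : ℕ) (c : ℕ → ℕ) : Set ℝ :=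
  { x | ∃ c' : ℕ → ℕ, sValid s c' ∧ (∀ k < n, c' k = c k) ∧ x = sVal s c' }

/-- The cylinder `Δ'_{c_1 ... c_n p}`: prefix of length `n` from `c`, next digit `p`. -/
def cylExt (s n : ℕ) (c : ℕ → ℕ) (p : ℕ) : Set ℝ :=
  { x | ∃ c' : ℕ → ℕ, sValid s c' ∧ (∀ k < n, c' k = c k) ∧ c' n = p ∧ x = sVal s c' }

/-- `g_n = Σ_{k=1}^n c_k / s^{c_1+⋯+c_k}`. -/
noncomputable def gPart (s n : ℕ) (c : ℕ → ℕ) : ℝ := ∑ k ∈ Finset.range n, sTerm s c k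

section Aux

variable {s : ℕ} {c d : ℕ → ℕ}

lemma sTerm_nonneg (c : ℕ → ℕ) (n : ℕ) : 0 ≤ sTerm s c n := by
  unfold sTerm; positivity

lemma sum_lower (hc : sValid s c) (n : ℕ) : n + 1 ≤ ∑ k ∈ range (n + 1), c k := by
  calc n + 1 = ∑ k ∈ range (n+1), 1 := by simp
  _ ≤ _ := Finset.sum_le_sum fun k _ => (hc k).1

set_option maxHeartbeats 1000000 in
lemma summable_sTerm (hs : 2 < s) (hc : sValid s c) : Summable (sTerm s c) := by
  have hs1 : (1:ℝ) < s := by exact_mod_cast lt_trans one_lt_two hs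
  have h0 : (0:ℝ) < s := lt_trans zero_lt_one hs1
  have hg : Summable (fun n => ((s:ℝ)⁻¹) ^ n) :=
    summable_geometric_of_lt_one (by positivity) (inv_lt_one_of_one_lt₀ hs1)
  refine Summable.of_nonneg_of_le (sTerm_nonneg c) (fun n => ?_) hg
  unfold sTerm
  rw [div_le_iff₀ (by positivity)]
  have h1 : (s:ℝ) ^ (n+1) ≤ (s:ℝ) ^ (∑ k ∈ range (n+1), c k) :=
    pow_le_pow_right₀ (le_of_lt hs1) (sum_lower hc n)
  have h2 : (c n : ℝ) ≤ s := by
    have := (hc n).2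
    exact_mod_cast le_trans this (Nat.sub_le s 1)
  calc (c n : ℝ) ≤ s := h2
  _ = ((s:ℝ)⁻¹)^n * s^(n+1) := by
      rw [pow_succ]; field_simp; rw [← mul_pow, one_div, inv_mul_cancel₀ h0.ne', one_pow]
  _ ≤ _ := mul_le_mul_of_nonneg_left h1 (by positivity)

lemma bern (hs : 2 < s) (a : ℕ) : 1 + (a:ℝ) * ((s:ℝ) - 1) ≤ (s:ℝ) ^ a := by
  have hs1 : (1:ℝ) < s := by exact_mod_cast lt_trans one_lt_two hs
  have := one_add_mul_le_pow (a := (s:ℝ) - 1) (by linarith) a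
  simpa using this

lemma term_le (hs : 2 < s) (c : ℕ → ℕ) (n : ℕ) :
    sTerm s c n ≤ (1/((s:ℝ)-1)) *
      (((s:ℝ)^(∑ k ∈ range n, c k))⁻¹ - ((s:ℝ)^(∑ k ∈ range (n+1), c k))⁻¹) := by
  have hs1 : (1:ℝ) < s := by exact_mod_cast lt_trans one_lt_two hs
  have h0 : (0:ℝ) < s := by linarith
  unfold sTerm
  rw [Finset.sum_range_succ, pow_add]
  set p : ℝ := (s:ℝ)^(∑ k ∈ range n, c k) with hp
  have hppos : 0 < p := by positivity
  set a : ℕ := c n with hadef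
  have hy : 1 + (a:ℝ) * ((s:ℝ) - 1) ≤ (s:ℝ) ^ a := bern hs a
  have hypos : (0:ℝ) < (s:ℝ)^a := by positivity
  have h2 : (a:ℝ) ≤ ((s:ℝ)^a - 1)/((s:ℝ)-1) := by
    rw [le_div_iff₀ (by linarith)]; linarith
  calc (a:ℝ)/(p * (s:ℝ)^a) ≤ (((s:ℝ)^a - 1)/((s:ℝ)-1))/(p * (s:ℝ)^a) := by
        gcongr
  _ = (1/((s:ℝ)-1)) * (p⁻¹ - (p * (s:ℝ)^a)⁻¹) := by
        field_simp

lemma partial_tail_le (hs : 2 < s) (c : ℕ → ℕ) (m N : ℕ) :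
    ∑ k ∈ range N, sTerm s c (m + k)
      ≤ (1/((s:ℝ)-1)) * (((s:ℝ)^(∑ k ∈ range m, c k))⁻¹
          - ((s:ℝ)^(∑ k ∈ range (m+N), c k))⁻¹) := by
  induction N with
  | zero => simp
  | succ N ih =>
    rw [Finset.sum_range_succ]
    have h1 := term_le hs c (m + N)
    have : m + (N + 1) = (m + N) + 1 := by ring
    rw [this]
    have hs1 : (1:ℝ) < s := by exact_mod_cast lt_trans one_lt_two hs
    nlinarith [h1, ih]

lemma summable_shift (hs : 2 < s) (hc : sValid s c) (m : ℕ) :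
    Summable (fun k => sTerm s c (m + k)) := by
  have := (summable_nat_add_iff (f := sTerm s c) m).mpr (summable_sTerm hs hc)
  simpa [Nat.add_comm] using this

lemma tail_le (hs : 2 < s) (hc : sValid s c) (m : ℕ) :
    (∑' k, sTerm s c (m + k)) ≤ (1/((s:ℝ)-1)) * ((s:ℝ)^(∑ k ∈ range m, c k))⁻¹ := by
  have hs1 : (1:ℝ) < s := by exact_mod_cast lt_trans one_lt_two hs
  apply Summable.tsum_le_of_sum_range_le (summable_shift hs hc m)
  intro N
  have := partial_tail_le hs c m N
  have h2 : (0:ℝ) ≤ (1/((s:ℝ)-1)) * ((s:ℝ)^(∑ k ∈ range (m+N), c k))⁻¹ := by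
    have h3 : (0:ℝ) < (s:ℝ)-1 := by linarith
    positivity
  nlinarith [this, h2]

lemma tail_ge (hs : 2 < s) (hc : sValid s c) (m : ℕ) :
    sTerm s c m ≤ (∑' k, sTerm s c (m + k)) := by
  have := Summable.le_tsum (summable_shift hs hc m) 0 (fun j _ => sTerm_nonneg c (m + j))
  simpa using this

lemma sVal_split (hs : 2 < s) (hc : sValid s c) (n : ℕ) :
    (∑' k, sTerm s c k) = (∑ k ∈ range n, sTerm s c k) + ∑' k, sTerm s c (n + k) := by
  have h := Summable.sum_add_tsum_nat_add n (summable_sTerm hs hc)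
  rw [← h]
  congr 1
  exact tsum_congr fun k => by rw [Nat.add_comm]

/-- The key numeric inequality: if `1 ≤ a < b` then
`b/s^b + (1/(s-1))/s^b < a/s^a`. -/
lemma digit_lt (hs : 2 < s) {a b : ℕ} (ha : 1 ≤ a) (hab : a < b) :
    (b:ℝ)/(s:ℝ)^b + (1/((s:ℝ)-1)) * ((s:ℝ)^b)⁻¹ < (a:ℝ)/(s:ℝ)^a := by
  have hs1 : (1:ℝ) < s := by exact_mod_cast lt_trans one_lt_two hs
  have hs3 : (3:ℝ) ≤ s := by exact_mod_cast hs
  have h0 : (0:ℝ) < s := by linarith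
  obtain ⟨m, rfl⟩ : ∃ m, b = a + m := ⟨b - a, by omega⟩
  have hm : 1 ≤ m := by omega
  have hberna := bern hs m
  have hpa : (0:ℝ) < (s:ℝ)^a := by positivity
  have hpb : (0:ℝ) < (s:ℝ)^(a+m) := by positivity
  have ha1 : (1:ℝ) ≤ (a:ℝ) := by exact_mod_cast ha
  have hm1 : (1:ℝ) ≤ (m:ℝ) := by exact_mod_cast hm
  have hne : ((s:ℝ)-1) ≠ 0 := by linarith
  have key : (s:ℝ)^a * (((a:ℝ)+m)*((s:ℝ)-1)+1) < (a:ℝ)*((s:ℝ)-1) * (s:ℝ)^(a+m) := by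
    rw [pow_add]
    have hmt : (2:ℝ) ≤ (m:ℝ)*((s:ℝ)-1) := by nlinarith
    have hmt0 : (0:ℝ) ≤ (m:ℝ)*((s:ℝ)-1) := by linarith
    have h5 : 2*((m:ℝ)*((s:ℝ)-1)) ≤ ((m:ℝ)*((s:ℝ)-1))*((s:ℝ)-1) := by nlinarith
    have step : ((a:ℝ)+m)*((s:ℝ)-1)+1 < (a:ℝ)*((s:ℝ)-1) * (1 + (m:ℝ)*((s:ℝ)-1)) := by
      nlinarith
    have h2 : (a:ℝ)*((s:ℝ)-1) * (1 + (m:ℝ)*((s:ℝ)-1)) ≤ (a:ℝ)*((s:ℝ)-1) * (s:ℝ)^m :=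
      mul_le_mul_of_nonneg_left hberna (by nlinarith)
    have step2 : ((a:ℝ)+m)*((s:ℝ)-1)+1 < (a:ℝ)*((s:ℝ)-1) * (s:ℝ)^m := lt_of_lt_of_le step h2
    nlinarith [mul_lt_mul_of_pos_left step2 hpa]
  have lhs_eq : ((a:ℝ)+m)/(s:ℝ)^(a+m) + (1/((s:ℝ)-1)) * ((s:ℝ)^(a+m))⁻¹
      = (((a:ℝ)+m)*((s:ℝ)-1)+1) / (((s:ℝ)-1) * (s:ℝ)^(a+m)) := by
    field_simp
  have hcast : ((a + m : ℕ):ℝ) = (a:ℝ) + m := by push_cast; ring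
  rw [hcast, lhs_eq, div_lt_div_iff₀ (by nlinarith : (0:ℝ) < ((s:ℝ)-1)*(s:ℝ)^(a+m)) hpa]
  nlinarith [key]

lemma val_lt (hs : 2 < s) (hc : sValid s c) (hd : sValid s d) (n : ℕ)
    (hpre : ∀ k < n, c k = d k) (hlt : c n < d n) : sVal s d < sVal s c := by
  have hs1 : (1:ℝ) < s := by exact_mod_cast lt_trans one_lt_two hs
  set P := ∑ k ∈ range n, c k with hPdef
  have hP : ∑ k ∈ range n, d k = P :=
    (Finset.sum_congr rfl fun k hk => (hpre k (mem_range.mp hk)).symm)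
  have hterm_eq : ∀ k ∈ range n, sTerm s c k = sTerm s d k := by
    intro k hk
    have hk' := mem_range.mp hk
    unfold sTerm
    rw [hpre k hk', Finset.sum_congr rfl fun j hj => hpre j (by have := mem_range.mp hj; omega)]
  have ec : sVal s c = (∑ k ∈ range n, sTerm s c k) + ∑' k, sTerm s c (n+k) :=
    sVal_split hs hc n
  have ed : sVal s d = (∑ k ∈ range n, sTerm s c k) + ∑' k, sTerm s d (n+k) := by
    rw [show sVal s d = ∑' k, sTerm s d k from rfl, sVal_split hs hd n,
      Finset.sum_congr rfl hterm_eq]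
  rw [ec, ed]
  have hsPpos : (0:ℝ) < (s:ℝ)^P := by positivity
  have hc_tail : (c n : ℝ)/((s:ℝ)^P * (s:ℝ)^(c n)) ≤ ∑' k, sTerm s c (n+k) := by
    have h := tail_ge hs hc n
    unfold sTerm at h
    rwa [Finset.sum_range_succ, ← hPdef, pow_add] at h
  have hd_tail : (∑' k, sTerm s d (n+k))
      ≤ (d n : ℝ)/((s:ℝ)^P * (s:ℝ)^(d n)) + (1/((s:ℝ)-1)) * ((s:ℝ)^P * (s:ℝ)^(d n))⁻¹ := by
    have hsplit : (∑' k, sTerm s d (n+k)) = sTerm s d n + ∑' k, sTerm s d ((n+1)+k) := by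
      have e0 : sTerm s d (n+0) = sTerm s d n := by norm_num
      have etail : (∑' b : ℕ, sTerm s d (n+(b+1))) = ∑' k : ℕ, sTerm s d ((n+1)+k) :=
        tsum_congr fun k => by rw [show n + (k+1) = (n+1)+k by omega]
      rw [Summable.tsum_eq_zero_add (summable_shift hs hd n), e0, etail]
    rw [hsplit]
    have h1 := tail_le hs hd (n+1)
    have h3 : (∑ k ∈ range (n+1), d k) = P + d n := by rw [Finset.sum_range_succ, hP]
    rw [h3, pow_add] at h1
    have h2 : sTerm s d n = (d n : ℝ)/((s:ℝ)^P * (s:ℝ)^(d n)) := by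
      unfold sTerm; rw [Finset.sum_range_succ, hP, pow_add]
    rw [h2]
    linarith
  have hkey := digit_lt hs (hc n).1 hlt
  have hmul := mul_lt_mul_of_pos_left hkey (inv_pos.2 hsPpos)
  have eL : ((s:ℝ)^P)⁻¹ * ((d n:ℝ)/(s:ℝ)^(d n) + (1/((s:ℝ)-1)) * ((s:ℝ)^(d n))⁻¹)
      = (d n : ℝ)/((s:ℝ)^P * (s:ℝ)^(d n)) + (1/((s:ℝ)-1)) * ((s:ℝ)^P * (s:ℝ)^(d n))⁻¹ := by
    rw [mul_inv]; ring
  have eR : ((s:ℝ)^P)⁻¹ * ((c n:ℝ)/(s:ℝ)^(c n)) = (c n:ℝ)/((s:ℝ)^P * (s:ℝ)^(c n)) := by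
    rw [div_eq_mul_inv, div_eq_mul_inv, mul_inv]; ring
  rw [eL, eR] at hmul
  linarith

lemma sVal_inj (hs : 2 < s) (hc : sValid s c) (hd : sValid s d)
    (h : sVal s c = sVal s d) : c = d := by
  by_contra hne
  have hex : ∃ n, c n ≠ d n := by
    by_contra h'
    push_neg at h'
    exact hne (funext h')
  set n := Nat.find hex with hn_def
  have hn : c n ≠ d n := Nat.find_spec hex
  have hpre : ∀ k < n, c k = d k := fun k hk => not_not.mp (Nat.find_min hex hk)
  rcases lt_or_gt_of_ne hn with h1 | h1
  · have := val_lt hs hc hd n hpre h1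
    linarith
  · have := val_lt hs hd hc n (fun k hk => (hpre k hk).symm) h1
    linarith

lemma not_countable_bool : ¬ Countable (ℕ → Bool) := by
  intro h
  have h1 : Cardinal.mk (ℕ → Bool) ≤ Cardinal.aleph0 := Cardinal.mk_le_aleph0
  rw [Cardinal.mk_arrow] at h1
  simp [Cardinal.mk_bool] at h1
  exact absurd (lt_of_lt_of_le (Cardinal.cantor _) h1) (by simp)

end Aux

theorem stmt2 (s : ℕ) (hs : 2 < s) :
    (∀ c d : ℕ → ℕ, sValid s c → sValid s d → sVal s c = sVal s d → c = d) ∧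
      ¬ (Sset s).Countable := by
  constructor
  · exact fun c d hc hd h => sVal_inj hs hc hd h
  · intro hcount
    set e : (ℕ → Bool) → ℕ → ℕ := fun b n => if b n then 2 else 1 with he
    have hvalid : ∀ b, sValid s (e b) := by
      intro b k
      simp only [he]
      by_cases h : b k <;> simp [h] <;> omega
    have he_inj : Function.Injective e := by
      intro b b' hbb
      funext k
      have := congrFun hbb k
      simp only [he] at this
      cases hb : b k <;> cases hb' : b' k <;> simp [hb, hb'] at this ⊢
    set f : (ℕ → Bool) → ℝ := fun b => sVal s (e b) with hf
    have hf_inj : Function.Injective f := by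
      intro b b' hbb
      exact he_inj (sVal_inj hs (hvalid b) (hvalid b') hbb)
    have hrange : f ⁻¹' (Sset s) = Set.univ := by
      ext b
      simp only [Set.mem_preimage, Set.mem_univ, iff_true]
      exact ⟨e b, hvalid b, rfl⟩
    have hcu : (Set.univ : Set (ℕ → Bool)).Countable := by
      rw [← hrange]
      exact hcount.preimage hf_inj
    exact not_countable_bool (Set.countable_univ_iff.mp hcu)
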